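/- The iterated tail-sum operators R^k preserve log-concavity: let k ≥ 1 be a natural number, a ∈ ℤ, and p : ℤ → ℝ with p(n) > 0 for all n ≥ a and p log-concave on [a,∞) (p(n)² ≥ p(n−1)·p(n+1) for all n ≥ a+1). Suppose that for every n ≥ a the series defining (R^k p)(n) := ∑_{m=0}^{∞} C(m+k−1, m)·p(n+m) converges (the family m ↦ C(m+k−1, m)·p(n+m) is summable), where C denotes the binomial coefficient. Then f := R^k p is log-concave on [a,∞): f(n)² ≥ f(n−1)·f(n+1) for all n ≥ a+1. -/

import Mathlib

open Finset

/-- Tail sums of a positive sequence are positive. -/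
private lemma tail_pos (a : ℤ) (q : ℤ → ℝ)
    (hq : ∀ n : ℤ, a ≤ n → 0 < q n)
    (hs : ∀ n : ℤ, a ≤ n → Summable fun m : ℕ => q (n + m)) :
    ∀ n : ℤ, a ≤ n → 0 < ∑' m : ℕ, q (n + m) := by
  intro n hn
  have h0 : q (n + ((0 : ℕ) : ℤ)) ≤ ∑' m : ℕ, q (n + m) :=
    Summable.le_tsum (hs n hn) 0 fun m _ => (hq _ (by linarith [Int.ofNat_nonneg m])).le
  have : 0 < q (n + ((0 : ℕ) : ℤ)) := hq _ (by norm_num; linarith)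
  linarith

/-- The one-step tail-sum operator preserves log-concavity. -/
private lemma tail_log_concave (a : ℤ) (q : ℤ → ℝ)
    (hq : ∀ n : ℤ, a ≤ n → 0 < q n)
    (hlc : ∀ n : ℤ, a + 1 ≤ n → q (n - 1) * q (n + 1) ≤ q n ^ 2)
    (hs : ∀ n : ℤ, a ≤ n → Summable fun m : ℕ => q (n + m)) :
    ∀ n : ℤ, a + 1 ≤ n →
      (∑' m : ℕ, q (n - 1 + m)) * (∑' m : ℕ, q (n + 1 + m)) ≤ (∑' m : ℕ, q (n + m)) ^ 2 := by
  intro n hn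
  have hna : a ≤ n := by linarith
  have hpos : ∀ m : ℕ, 0 < q (n + m) := fun m =>
    hq _ (by linarith [Int.ofNat_nonneg m])
  set F : ℝ := ∑' m : ℕ, q (n + m) with hF
  have hFpos : 0 < F := tail_pos a q hq hs n hna
  -- F(n-1) = q(n-1) + F
  have h1 : (∑' m : ℕ, q (n - 1 + m)) = q (n - 1) + F := by
    rw [Summable.tsum_eq_zero_add (hs (n - 1) (by linarith))]
    congr 1
    · norm_num
    · exact tsum_congr fun m => congrArg q (by push_cast; ring)
  -- F = q(n) + F(n+1)
  have h2 : F = q n + ∑' m : ℕ, q (n + 1 + m) := by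
    rw [hF, Summable.tsum_eq_zero_add (hs n hna)]
    congr 1
    · norm_num
    · exact tsum_congr fun m => congrArg q (by push_cast; ring)
  have hq0 := hq (n - 1) (by linarith)
  have hq1 := hq n hna
  rcases le_or_gt (q (n - 1)) (q n) with hcase | hcase
  · -- easy case
    nlinarith [hFpos, hq0, hq1]
  · -- geometric bound case
    set r : ℝ := q n / q (n - 1) with hr
    have hr0 : 0 ≤ r := le_of_lt (div_pos hq1 hq0)
    have hr1 : r < 1 := (div_lt_one hq0).mpr hcase
    -- chain inequality: q(n+m+1) * q(n-1) ≤ q(n+m) * q n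
    have T : ∀ m : ℕ, q (n + m + 1) * q (n - 1) ≤ q (n + m) * q n := by
      intro m
      induction m with
      | zero =>
        have := hlc n hn
        simpa using by nlinarith [hlc n hn]
      | succ m ih =>
        have hlc' := hlc (n + m + 1) (by linarith [Int.ofNat_nonneg m])
        rw [show (n + (m : ℤ) + 1) - 1 = n + m by ring] at hlc'
        have e3 : n + ((m + 1 : ℕ) : ℤ) = n + m + 1 := by push_cast; ring
        rw [e3]
        have hp1 := hpos m
        have hp2 : 0 < q (n + m + 1) := by
          have := hpos (m + 1); rw [e3] at this; exact this
        have key1 := mul_le_mul_of_nonneg_left hlc' hq0.le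
        have key2 := mul_le_mul_of_nonneg_left ih hp2.le
        nlinarith [key1, key2, hp1, hp2, hq0, hq1, mul_pos hp1 hq0]
    -- geometric bound: q(n+m) ≤ q n * r^m
    have U : ∀ m : ℕ, q (n + m) ≤ q n * r ^ m := by
      intro m
      induction m with
      | zero => simp
      | succ m ih =>
        have hT := T m
        have e3 : n + ((m + 1 : ℕ) : ℤ) = n + m + 1 := by push_cast; ring
        rw [e3]
        have : q (n + m + 1) ≤ q (n + m) * r := by
          rw [hr, ← mul_div_assoc]
          exact (le_div_iff₀ hq0).mpr hT
        calc q (n + m + 1) ≤ q (n + m) * r := this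
          _ ≤ q n * r ^ m * r := by nlinarith [hpos m, hr0, ih]
          _ = q n * r ^ (m + 1) := by ring
    -- F ≤ q n / (1 - r)
    have hFle : F ≤ q n * (1 - r)⁻¹ := by
      rw [hF, ← tsum_geometric_of_lt_one hr0 hr1, ← tsum_mul_left]
      exact Summable.tsum_le_tsum U (hs n hna)
        (Summable.mul_left _ (summable_geometric_of_lt_one hr0 hr1))
    have hkey : F * (q (n - 1) - q n) ≤ q (n - 1) * q n := by
      have h1r : 0 < 1 - r := by linarith
      have hne : q (n - 1) - q n ≠ 0 := by linarith
      have : (1 - r)⁻¹ * (q (n - 1) - q n) = q (n - 1) := by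
        rw [hr]
        field_simp
      calc F * (q (n - 1) - q n) ≤ q n * (1 - r)⁻¹ * (q (n - 1) - q n) := by
            nlinarith [hFle, hcase]
        _ = q n * ((1 - r)⁻¹ * (q (n - 1) - q n)) := by ring
        _ = q n * q (n - 1) := by rw [this]
        _ = q (n - 1) * q n := by ring
    nlinarith [hkey, hFpos]


private lemma hockey (j l : ℕ) :
    ∑ i ∈ Finset.range (l + 1), ((i + j).choose i : ℝ) = ((l + (j + 1)).choose l : ℝ) := by
  induction l with
  | zero => simp
  | succ l ih =>
    rw [Finset.sum_range_succ, ih]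
    have : ((l + 1) + (j + 1)).choose (l + 1) = (l + (j + 1)).choose l + ((l + 1) + j).choose (l + 1) := by
      rw [show (l + 1) + (j + 1) = (l + j + 1) + 1 by ring]
      rw [Nat.choose_succ_succ' (l + j + 1) l]
      congr 2 <;> ring
    rw [this]; push_cast; ring

-- Fubini: R^{j+1} p at n equals tail sums of R^j p, with summability.
private lemma fubini (a : ℤ) (p : ℤ → ℝ) (j : ℕ)
    (hpos : ∀ n : ℤ, a ≤ n → 0 < p n)
    (hS1 : ∀ n : ℤ, a ≤ n → Summable fun m : ℕ => ((m + (j + 1)).choose m : ℝ) * p (n + m))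
    (n : ℤ) (hn : a ≤ n) :
    (Summable fun m : ℕ => ∑' i : ℕ, ((i + j).choose i : ℝ) * p (n + m + i)) ∧
      (∑' m : ℕ, ((m + (j + 1)).choose m : ℝ) * p (n + m)) =
        ∑' m : ℕ, ∑' i : ℕ, ((i + j).choose i : ℝ) * p (n + m + i) := by
  set A : ℕ × ℕ → ℝ := fun x => ((x.1 + j).choose x.1 : ℝ) * p (n + x.1 + x.2) with hA
  have hA0 : ∀ x, 0 ≤ A x := by
    intro x
    exact mul_nonneg (by positivity)
      (hpos _ (by linarith [Int.ofNat_nonneg x.1, Int.ofNat_nonneg x.2])).le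
  -- fiber sums over antidiagonals
  have hfib : ∀ l : ℕ, (∑' y : (Finset.HasAntidiagonal.antidiagonal l : Finset (ℕ × ℕ)), A y) =
      ((l + (j + 1)).choose l : ℝ) * p (n + l) := by
    intro l
    rw [Finset.tsum_subtype]
    rw [Finset.Nat.sum_antidiagonal_eq_sum_range_succ_mk]
    have : ∀ i ∈ Finset.range (l + 1),
        A (i, l - i) = ((i + j).choose i : ℝ) * p (n + l) := by
      intro i hi
      have hil : i ≤ l := by simpa [Nat.lt_succ_iff] using Finset.mem_range.mp hi
      have : (n : ℤ) + i + ((l - i : ℕ) : ℤ) = n + l := by omega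
      have hAe : A (i, l - i) = ((i + j).choose i : ℝ) * p (n + i + ((l - i : ℕ) : ℤ)) := rfl
      rw [hAe, this]
    rw [Finset.sum_congr rfl this, ← Finset.sum_mul, hockey]
  -- summability over the sigma type
  have hsig : Summable fun y : (Σ l : ℕ, (Finset.HasAntidiagonal.antidiagonal l : Finset (ℕ × ℕ))) => A y.2 := by
    apply (summable_sigma_of_nonneg fun y => hA0 _).mpr
    constructor
    · intro l; exact Summable.of_finite
    · apply Summable.congr (hS1 n hn)
      intro l
      exact (hfib l).symm
  have hsumA : Summable A := (Finset.HasAntidiagonal.sigmaAntidiagonalEquivProd (A := ℕ)).summable_iff.mp hsig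
  have htsum1 : ∑' x : ℕ × ℕ, A x = ∑' m : ℕ, ((m + (j + 1)).choose m : ℝ) * p (n + m) := by
    rw [← (Finset.HasAntidiagonal.sigmaAntidiagonalEquivProd (A := ℕ)).tsum_eq A]
    exact (Summable.tsum_sigma hsig).trans (tsum_congr hfib)
  have hcol : Summable fun m : ℕ => ∑' i : ℕ, A (i, m) := hsumA.prod_symm.prod
  have hts : ∑' x : ℕ × ℕ, A x = ∑' m : ℕ, ∑' i : ℕ, A (i, m) := by
    rw [← (Equiv.prodComm ℕ ℕ).tsum_eq A]
    exact Summable.tsum_prod hsumA.prod_symm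
  have hterm : ∀ m i : ℕ, A (i, m) = ((i + j).choose i : ℝ) * p (n + m + i) := by
    intro m i
    show ((i + j).choose i : ℝ) * p (n + i + m) = _
    rw [show (n : ℤ) + i + m = n + m + i by ring]
  constructor
  · exact hcol.congr fun m => tsum_congr fun i => hterm m i
  · rw [← htsum1, hts]
    exact tsum_congr fun m => tsum_congr fun i => hterm m i


/-- The iterated tail-sum operators R^k preserve log-concavity:
(R^k p)(n) := ∑_{m=0}^∞ C(m+k-1, m)·p(n+m). -/
theorem Rk_preserves_log_concavity
    (k : ℕ) (hk : 1 ≤ k) (a : ℤ) (p : ℤ → ℝ)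
    (hpos : ∀ n : ℤ, a ≤ n → 0 < p n)
    (hlc : ∀ n : ℤ, a + 1 ≤ n → p (n - 1) * p (n + 1) ≤ p n ^ 2)
    (hsum : ∀ n : ℤ, a ≤ n →
      Summable fun m : ℕ => ((m + k - 1).choose m : ℝ) * p (n + m))
    (f : ℤ → ℝ)
    (hf : ∀ n : ℤ, a ≤ n → f n = ∑' m : ℕ, ((m + k - 1).choose m : ℝ) * p (n + m)) :
    ∀ n : ℤ, a + 1 ≤ n → f (n - 1) * f (n + 1) ≤ f n ^ 2 := by
  obtain ⟨k', rfl⟩ : ∃ k', k = k' + 1 := ⟨k - 1, by omega⟩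
  have hw : ∀ m : ℕ, (m + (k' + 1) - 1).choose m = (m + k').choose m := by
    intro m; congr 1
  have hsum' : ∀ n : ℤ, a ≤ n →
      Summable fun m : ℕ => ((m + k').choose m : ℝ) * p (n + m) := by
    intro n hn
    exact (hsum n hn).congr fun m => by rw [hw]
  have SJ : ∀ j, j ≤ k' → ∀ n : ℤ, a ≤ n →
      Summable fun m : ℕ => ((m + j).choose m : ℝ) * p (n + m) := by
    intro j hj n hn
    refine Summable.of_nonneg_of_le (fun m => ?_) (fun m => ?_) (hsum' n hn)
    · exact mul_nonneg (by positivity) (hpos _ (by linarith [Int.ofNat_nonneg m])).le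
    · refine mul_le_mul_of_nonneg_right ?_ (hpos _ (by linarith [Int.ofNat_nonneg m])).le
      exact_mod_cast Nat.choose_le_choose m (by omega : m + j ≤ m + k')
  have GLC : ∀ j, j ≤ k' → ∀ n : ℤ, a + 1 ≤ n →
      (∑' m : ℕ, ((m + j).choose m : ℝ) * p (n - 1 + m)) *
        (∑' m : ℕ, ((m + j).choose m : ℝ) * p (n + 1 + m)) ≤
        (∑' m : ℕ, ((m + j).choose m : ℝ) * p (n + m)) ^ 2 := by
    intro j
    induction j with
    | zero =>
      intro _ n hn
      have hG0 : ∀ x : ℤ, (∑' m : ℕ, ((m + 0).choose m : ℝ) * p (x + m)) = ∑' m : ℕ, p (x + m) :=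
        fun x => tsum_congr fun m => by simp
      rw [hG0, hG0, hG0]
      refine tail_log_concave a p hpos hlc (fun x hx => ?_) n hn
      exact ((SJ 0 (by omega) x hx).congr fun m => by simp)
    | succ j ih =>
      intro hj n hn
      have hjk : j ≤ k' := by omega
      set q : ℤ → ℝ := fun x => ∑' i : ℕ, ((i + j).choose i : ℝ) * p (x + i) with hqdef
      have hqpos : ∀ x : ℤ, a ≤ x → 0 < q x := by
        intro x hx
        have h0 : (((0 : ℕ) + j).choose 0 : ℝ) * p (x + ((0 : ℕ) : ℤ)) ≤ q x :=
          Summable.le_tsum (SJ j hjk x hx) 0 fun i _ =>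
            mul_nonneg (by positivity) (hpos _ (by linarith [Int.ofNat_nonneg i])).le
        norm_num at h0
        linarith [hpos x hx]
      have hqlc : ∀ x : ℤ, a + 1 ≤ x → q (x - 1) * q (x + 1) ≤ q x ^ 2 := ih hjk
      have hqs : ∀ x : ℤ, a ≤ x → Summable fun m : ℕ => q (x + m) := by
        intro x hx
        exact (fubini a p j hpos (fun y hy => SJ (j + 1) hj y hy) x hx).1
      have hfub : ∀ x : ℤ, a ≤ x →
          (∑' m : ℕ, ((m + (j + 1)).choose m : ℝ) * p (x + m)) = ∑' m : ℕ, q (x + m) := by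
        intro x hx
        exact (fubini a p j hpos (fun y hy => SJ (j + 1) hj y hy) x hx).2
      rw [hfub (n - 1) (by linarith), hfub (n + 1) (by linarith), hfub n (by linarith)]
      exact tail_log_concave a q hqpos hqlc hqs n hn
  intro n hn
  rw [hf (n - 1) (by linarith), hf (n + 1) (by linarith), hf n (by linarith)]
  have hrw : ∀ x : ℤ, (∑' m : ℕ, ((m + (k' + 1) - 1).choose m : ℝ) * p (x + m)) =
      ∑' m : ℕ, ((m + k').choose m : ℝ) * p (x + m) :=
    fun x => tsum_congr fun m => by rw [hw]
  rw [hrw, hrw, hrw]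
  exact GLC k' le_rfl n hn
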